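/- Let Γ be a group acting on the right on a complex vector space V via operators |γ, let v be a multiplier-system twist, and let F be an automorphic form, i.e. F|γ = F for all γ ∈ Γ. Fix z₀ ∈ ℍ and define ψ_γ(t) = ∫_{γ^{-1}z₀}^{z₀} (z-t)^{r-2} F(z) dz (path in ℍ, branch as above, action |_{v,2-r}). Then ψ satisfies the cocycle relation ψ_{γδ} = ψ_γ|_{v,2-r} δ + ψ_δ for all γ, δ ∈ Γ, and a change of the base point z₀ to z₁ changes ψ by the coboundary γ ↦ b|_{v,2-r}(γ - 1) with b(t) = ∫_{z₀}^{z₁} (z-t)^{r-2} F(z) dz. -/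

import Mathlib

open Complex

/-- Lower row of the Möbius action: `cz + d`. -/
noncomputable def mdenom (g : Matrix.SpecialLinearGroup (Fin 2) ℝ) (z : ℂ) : ℂ :=
  (g.1 1 0 : ℂ) * z + (g.1 1 1 : ℂ)

/-- Möbius action of `SL₂(ℝ)` on ℂ: `(az+b)/(cz+d)`. -/
noncomputable def mact (g : Matrix.SpecialLinearGroup (Fin 2) ℝ) (z : ℂ) : ℂ :=
  ((g.1 0 0 : ℂ) * z + (g.1 0 1 : ℂ)) / mdenom g z

abbrev SL2 := Matrix.SpecialLinearGroup (Fin 2) ℝ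

lemma det_coe (g : SL2) : (g.1 0 0 : ℂ) * g.1 1 1 - (g.1 0 1 : ℂ) * g.1 1 0 = 1 := by
  have h := g.2
  rw [Matrix.det_fin_two] at h
  have := congrArg (fun x : ℝ => (x : ℂ)) h
  push_cast at this
  simpa using this

lemma im_mdenom (g : SL2) (z : ℂ) : (mdenom g z).im = g.1 1 0 * z.im := by
  simp [mdenom]

lemma mdenom_ne_zero (g : SL2) {z : ℂ} (hz : z.im ≠ 0) : mdenom g z ≠ 0 := by
  rcases eq_or_ne (g.1 1 0) 0 with hc | hc
  · have h := g.2
    rw [Matrix.det_fin_two, hc] at h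
    intro h0
    have him : (mdenom g z).im = 0 := by rw [h0]; simp
    have hre : (mdenom g z).re = g.1 1 1 := by simp [mdenom, hc]
    have : (g.1 1 1 : ℝ) ≠ 0 := by intro hd; rw [hd] at h; simp at h
    rw [h0] at hre
    simp at hre
    exact this hre.symm
  · intro h0
    have := im_mdenom g z
    rw [h0] at this
    simp at this
    rcases this with h | h
    exacts [hc h, hz h]

lemma im_mact (g : SL2) {z : ℂ} (hz : z.im ≠ 0) :
    (mact g z).im = z.im / normSq (mdenom g z) := by
  have hd := mdenom_ne_zero g hz
  rw [mact, div_im]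
  rw [div_sub_div_same]
  congr 1
  have h := g.2
  rw [Matrix.det_fin_two] at h
  simp only [mdenom, add_re, add_im, mul_re, mul_im, ofReal_re, ofReal_im]
  ring_nf
  linear_combination z.im * h

lemma entry_mul (g h : SL2) (i j : Fin 2) :
    ((g * h).1 i j : ℂ) = (g.1 i 0 : ℂ) * h.1 0 j + (g.1 i 1 : ℂ) * h.1 1 j := by
  have : (g * h).1 i j = g.1 i 0 * h.1 0 j + g.1 i 1 * h.1 1 j := by
    rw [Matrix.SpecialLinearGroup.coe_mul, Matrix.mul_apply, Fin.sum_univ_two]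
  rw [this]; push_cast; ring

lemma mdenom_mul (g h : SL2) {z : ℂ} (hz : mdenom h z ≠ 0) :
    mdenom (g * h) z = mdenom g (mact h z) * mdenom h z := by
  have hz' : ((h.1 1 0 : ℂ) * z + (h.1 1 1 : ℂ)) ≠ 0 := hz
  simp only [mdenom, mact, entry_mul]
  field_simp
  ring

lemma mdenom_one (z : ℂ) : mdenom 1 z = 1 := by
  simp [mdenom]

lemma mact_one (z : ℂ) : mact 1 z = z := by
  simp [mact, mdenom]

lemma mact_mul (g h : SL2) {z : ℂ} (h1 : mdenom h z ≠ 0)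
    (h2 : mdenom g (mact h z) ≠ 0) : mact (g * h) z = mact g (mact h z) := by
  have hgh : mdenom (g * h) z = mdenom g (mact h z) * mdenom h z := mdenom_mul g h h1
  have h1' : ((h.1 1 0 : ℂ) * z + (h.1 1 1 : ℂ)) ≠ 0 := h1
  have h2' : ((g.1 1 0 : ℂ) * mact h z + (g.1 1 1 : ℂ)) ≠ 0 := h2
  rw [mact, mact, hgh]
  rw [show mact h z = ((h.1 0 0 : ℂ) * z + (h.1 0 1 : ℂ)) / ((h.1 1 0 : ℂ) * z + (h.1 1 1 : ℂ)) from rfl] at h2' ⊢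
  simp only [mdenom, entry_mul]
  field_simp
  ring

lemma mdenom_inv_mact (g : SL2) {z : ℂ} (hz : z.im ≠ 0) :
    mdenom g⁻¹ (mact g z) * mdenom g z = 1 := by
  rw [← mdenom_mul g⁻¹ g (mdenom_ne_zero g hz), inv_mul_cancel, mdenom_one]

lemma mact_inv (g : SL2) {z : ℂ} (hz : z.im ≠ 0) : mact g⁻¹ (mact g z) = z := by
  have h1 := mdenom_ne_zero g hz
  have h2 : mdenom g⁻¹ (mact g z) ≠ 0 := by
    intro h0
    have := mdenom_inv_mact g hz
    rw [h0] at this; simp at this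
  rw [← mact_mul g⁻¹ g h1 h2, inv_mul_cancel, mact_one]

lemma mact_sub_mact (g : SL2) {w t : ℂ} (hw : mdenom g w ≠ 0) (ht : mdenom g t ≠ 0) :
    mact g w - mact g t = (w - t) / (mdenom g w * mdenom g t) := by
  have hdet := det_coe g
  have hw' : ((g.1 1 0 : ℂ) * w + (g.1 1 1 : ℂ)) ≠ 0 := hw
  have ht' : ((g.1 1 0 : ℂ) * t + (g.1 1 1 : ℂ)) ≠ 0 := ht
  simp only [mact, mdenom]
  rw [div_sub_div _ _ hw' ht', div_eq_div_iff (mul_ne_zero hw' ht') (mul_ne_zero hw' ht')]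
  linear_combination (w - t) * (((g.1 1 0 : ℂ) * w + (g.1 1 1 : ℂ)) * ((g.1 1 0 : ℂ) * t + (g.1 1 1 : ℂ))) * hdet

lemma hasDerivAt_mact (g : SL2) {z : ℂ} (hz : mdenom g z ≠ 0) :
    HasDerivAt (mact g) (((mdenom g z) ^ 2)⁻¹) z := by
  have hnum : HasDerivAt (fun z : ℂ => (g.1 0 0 : ℂ) * z + (g.1 0 1 : ℂ)) (g.1 0 0 : ℂ) z := by
    simpa using ((hasDerivAt_id z).const_mul (g.1 0 0 : ℂ)).add_const (g.1 0 1 : ℂ)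
  have hden : HasDerivAt (fun z : ℂ => (g.1 1 0 : ℂ) * z + (g.1 1 1 : ℂ)) (g.1 1 0 : ℂ) z := by
    simpa using ((hasDerivAt_id z).const_mul (g.1 1 0 : ℂ)).add_const (g.1 1 1 : ℂ)
  have h := hnum.div hden hz
  refine h.congr_deriv ?_
  have hdet := det_coe g
  simp only [mdenom]
  rw [show (g.1 0 0 : ℂ) * ((g.1 1 0 : ℂ) * z + (g.1 1 1 : ℂ)) -
      ((g.1 0 0 : ℂ) * z + (g.1 0 1 : ℂ)) * (g.1 1 0 : ℂ) = 1 by linear_combination hdet, one_div]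

/-- Complex power with the branch `arg ∈ [-π, π)`. -/
noncomputable def cpowLHP (w s : ℂ) : ℂ :=
  if w.arg = Real.pi then Complex.exp (s * (Complex.log w - 2 * (Real.pi : ℂ) * Complex.I))
  else w ^ s

noncomputable def logLHP (w : ℂ) : ℂ :=
  if w.arg = Real.pi then Complex.log w - 2 * (Real.pi : ℂ) * Complex.I else Complex.log w

lemma cpowLHP_eq {w : ℂ} (hw : w ≠ 0) (s : ℂ) : cpowLHP w s = Complex.exp (s * logLHP w) := by
  unfold cpowLHP logLHP
  split
  · rfl
  · rw [cpow_def_of_ne_zero hw, mul_comm]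

lemma cpowLHP_ne_zero {w : ℂ} (hw : w ≠ 0) (s : ℂ) : cpowLHP w s ≠ 0 := by
  rw [cpowLHP_eq hw]; exact Complex.exp_ne_zero _

lemma exp_logLHP {w : ℂ} (hw : w ≠ 0) : Complex.exp (logLHP w) = w := by
  unfold logLHP
  split
  · rw [Complex.exp_sub, Complex.exp_log hw]
    rw [show (2 : ℂ) * (Real.pi : ℂ) * Complex.I = 2 * Real.pi * Complex.I by push_cast; ring]
    rw [Complex.exp_two_pi_mul_I]
    simp
  · exact Complex.exp_log hw

lemma logLHP_im (w : ℂ) : (logLHP w).im = if w.arg = Real.pi then -Real.pi else w.arg := by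
  unfold logLHP
  by_cases h : w.arg = Real.pi
  · rw [if_pos h, if_pos h]
    simp only [Complex.sub_im, Complex.log_im, h, Complex.mul_im, Complex.mul_re,
      Complex.ofReal_re, Complex.ofReal_im, Complex.I_re, Complex.I_im,
      Complex.re_ofNat, Complex.im_ofNat]
    ring
  · rw [if_neg h, if_neg h]
    exact Complex.log_im w

lemma arg_pos_of_im_pos {z : ℂ} (h : 0 < z.im) : 0 < z.arg := by
  rcases lt_or_eq_of_le (Complex.arg_nonneg_iff.2 h.le) with h' | h'
  · exact h'
  · exfalso
    have := Complex.arg_eq_zero_iff.1 h'.symm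
    exact absurd this.2 (by linarith)

lemma arg_lt_pi_of_im_pos {z : ℂ} (h : 0 < z.im) : z.arg < Real.pi :=
  Complex.arg_lt_pi_iff.2 (Or.inr (by linarith))

lemma arg_add_logLHP_bound (g : SL2) {w t : ℂ} (hw : 0 < w.im) (ht : t.im < 0) :
    |(mdenom g w).arg + (logLHP (mdenom g t)).im| < Real.pi := by
  have hpi := Real.pi_pos
  rcases lt_trichotomy (g.1 1 0) 0 with hc | hc | hc
  · -- c < 0 : im A < 0, im B > 0
    have hA : (mdenom g w).im < 0 := by rw [im_mdenom]; exact mul_neg_of_neg_of_pos hc hw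
    have hB : 0 < (mdenom g t).im := by rw [im_mdenom]; exact mul_pos_of_neg_of_neg hc ht
    have h1 : -Real.pi < (mdenom g w).arg := Complex.neg_pi_lt_arg _
    have h2 : (mdenom g w).arg < 0 := Complex.arg_neg_iff.2 hA
    have h3 : (logLHP (mdenom g t)).im = (mdenom g t).arg := by
      rw [logLHP_im, if_neg]
      intro h
      have := Complex.arg_eq_pi_iff.1 h
      linarith [this.2]
    have h4 : 0 < (mdenom g t).arg := arg_pos_of_im_pos hB
    have h5 : (mdenom g t).arg < Real.pi := arg_lt_pi_of_im_pos hB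
    rw [h3, abs_lt]; constructor <;> linarith
  · -- c = 0 : A = B = d real, d ≠ 0
    have hd : g.1 1 1 ≠ 0 := by
      have h := g.2
      rw [Matrix.det_fin_two, hc] at h
      intro h0; rw [h0] at h; simp at h
    have hAw : mdenom g w = ((g.1 1 1 : ℝ) : ℂ) := by simp [mdenom, hc]
    have hAt : mdenom g t = ((g.1 1 1 : ℝ) : ℂ) := by simp [mdenom, hc]
    rcases lt_or_gt_of_ne hd with hd | hd
    · have harg : (((g.1 1 1 : ℝ) : ℂ)).arg = Real.pi := Complex.arg_ofReal_of_neg hd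
      rw [hAw, hAt, logLHP_im, if_pos harg, harg]
      simpa using hpi
    · have harg : (((g.1 1 1 : ℝ) : ℂ)).arg = 0 := Complex.arg_ofReal_of_nonneg hd.le
      rw [hAw, hAt, logLHP_im, if_neg (by rw [harg]; exact ne_of_lt hpi), harg]
      simpa using hpi
  · -- c > 0 : im A > 0, im B < 0
    have hA : 0 < (mdenom g w).im := by rw [im_mdenom]; exact mul_pos hc hw
    have hB : (mdenom g t).im < 0 := by rw [im_mdenom]; exact mul_neg_of_pos_of_neg hc ht
    have h1 : 0 < (mdenom g w).arg := arg_pos_of_im_pos hA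
    have h2 : (mdenom g w).arg < Real.pi := arg_lt_pi_of_im_pos hA
    have h3 : (logLHP (mdenom g t)).im = (mdenom g t).arg := by
      rw [logLHP_im, if_neg]
      intro h
      have := Complex.arg_eq_pi_iff.1 h
      linarith [this.2]
    have h4 : -Real.pi < (mdenom g t).arg := Complex.neg_pi_lt_arg _
    have h5 : (mdenom g t).arg < 0 := Complex.arg_neg_iff.2 hB
    rw [h3, abs_lt]; constructor <;> linarith

lemma log_branch {ζ A B : ℂ} (hζ : 0 < ζ.im) (hq : 0 < (ζ / (A * B)).im)
    (hA : A ≠ 0) (hB : B ≠ 0) (hS : |A.arg + (logLHP B).im| < Real.pi) :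
    Complex.log (ζ / (A * B)) = Complex.log ζ - Complex.log A - logLHP B := by
  have hζ0 : ζ ≠ 0 := by intro h; rw [h] at hζ; simp at hζ
  have hq0 : ζ / (A * B) ≠ 0 := by intro h; rw [h] at hq; simp at hq
  have hexp : Complex.exp (Complex.log (ζ / (A * B))) =
      Complex.exp (Complex.log ζ - Complex.log A - logLHP B) := by
    rw [Complex.exp_log hq0, Complex.exp_sub, Complex.exp_sub, Complex.exp_log hζ0,
      Complex.exp_log hA, exp_logLHP hB]
    field_simp
  obtain ⟨n, hn⟩ := Complex.exp_eq_exp_iff_exists_int.1 hexp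
  have him := congrArg Complex.im hn
  simp only [Complex.add_im, Complex.sub_im, Complex.log_im] at him
  have hnim : ((n : ℂ) * (2 * Real.pi * Complex.I)).im = n * (2 * Real.pi) := by
    simp [Complex.mul_im, Complex.mul_re]
  rw [hnim] at him
  -- him : arg (ζ/(A*B)) = arg ζ - A.arg - (logLHP B).im + n * (2π)
  have hb1 : 0 < (ζ / (A * B)).arg := arg_pos_of_im_pos hq
  have hb2 : (ζ / (A * B)).arg < Real.pi := arg_lt_pi_of_im_pos hq
  have hb3 : 0 < ζ.arg := arg_pos_of_im_pos hζ
  have hb4 : ζ.arg < Real.pi := arg_lt_pi_of_im_pos hζ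
  have hS' := abs_lt.1 hS
  have hpi := Real.pi_pos
  have hn0 : n = 0 := by
    by_contra h0
    rcases lt_or_gt_of_ne h0 with h | h
    · have : (n : ℝ) ≤ -1 := by exact_mod_cast Int.le_of_lt_add_one (by simpa using h)
      nlinarith
    · have : (1 : ℝ) ≤ n := by exact_mod_cast h
      nlinarith
  rw [hn0] at hn
  simpa using hn

lemma cpow_ne_zero' {x : ℂ} (hx : x ≠ 0) (s : ℂ) : x ^ s ≠ 0 := by
  rw [Complex.cpow_def_of_ne_zero hx]; exact Complex.exp_ne_zero _

lemma cpow_branch {ζ A B : ℂ} (hζ : 0 < ζ.im) (hq : 0 < (ζ / (A * B)).im)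
    (hA : A ≠ 0) (hB : B ≠ 0) (hS : |A.arg + (logLHP B).im| < Real.pi) (s : ℂ) :
    (ζ / (A * B)) ^ s = ζ ^ s * (A ^ s)⁻¹ * (cpowLHP B s)⁻¹ := by
  have hζ0 : ζ ≠ 0 := by intro h; rw [h] at hζ; simp at hζ
  have hq0 : ζ / (A * B) ≠ 0 := by intro h; rw [h] at hq; simp at hq
  rw [Complex.cpow_def_of_ne_zero hq0, Complex.cpow_def_of_ne_zero hζ0,
    Complex.cpow_def_of_ne_zero hA, cpowLHP_eq hB, log_branch hζ hq hA hB hS,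
    ← Complex.exp_neg, ← Complex.exp_neg, ← Complex.exp_add, ← Complex.exp_add]
  ring_nf

def UHP : Set ℂ := {z : ℂ | 0 < z.im}

lemma isOpen_UHP : IsOpen UHP := isOpen_lt continuous_const Complex.continuous_im

lemma seg_im {p x : ℂ} (s : ℝ) : (p + (s : ℂ) * (x - p)).im = p.im + s * (x.im - p.im) := by
  simp [Complex.add_im, Complex.mul_im, Complex.sub_im]

lemma seg_mem_UHP {p x : ℂ} (hp : p ∈ UHP) (hx : x ∈ UHP) {s : ℝ} (h0 : 0 ≤ s) (h1 : s ≤ 1) :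
    p + (s : ℂ) * (x - p) ∈ UHP := by
  have h := seg_im (p := p) (x := x) s
  have hp' : 0 < p.im := hp
  have hx' : 0 < x.im := hx
  show 0 < (p + (s : ℂ) * (x - p)).im
  rw [h]
  rcases le_or_gt p.im x.im with hle | hle
  · nlinarith
  · nlinarith

lemma integrand_diffOn {r t : ℂ} (ht : t.im < 0) {F : ℂ → ℂ}
    (hF : DifferentiableOn ℂ F UHP) :
    DifferentiableOn ℂ (fun z => (z - t) ^ (r - 2) * F z) UHP := by
  intro z hz
  have hz' : 0 < z.im := hz
  have hslit : z - t ∈ Complex.slitPlane := by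
    rw [Complex.mem_slitPlane_iff]
    right
    rw [Complex.sub_im]
    intro h
    linarith [h]
  have h1 : DifferentiableAt ℂ (fun z : ℂ => (z - t) ^ (r - 2)) z :=
    (differentiableAt_id.sub_const t).cpow (differentiableAt_const _) hslit
  have h2 : DifferentiableAt ℂ F z := hF.differentiableAt (isOpen_UHP.mem_nhds hz)
  exact (h1.mul h2).differentiableWithinAt

lemma contOn_deriv {g : ℂ → ℂ} (hg : DifferentiableOn ℂ g UHP) :
    ContinuousOn (deriv g) UHP :=
  ((hg.analyticOnNhd isOpen_UHP).deriv).continuousOn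

lemma hasDerivAt_primitive {g : ℂ → ℂ} (hg : DifferentiableOn ℂ g UHP) {p w : ℂ}
    (hp : p ∈ UHP) (hw : w ∈ UHP) :
    HasDerivAt (fun x : ℂ => ∫ s in (0:ℝ)..1, (x - p) * g (p + (s : ℂ) * (x - p))) (g w) w := by
  obtain ⟨ε, hε, hball⟩ := Metric.isOpen_iff.1 isOpen_UHP w hw
  set δ := ε / 2 with hδdef
  have hδ : 0 < δ := by positivity
  have hcb : Metric.closedBall w δ ⊆ UHP :=
    (Metric.closedBall_subset_ball (by linarith)).trans hball
  set K : Set ℂ := (fun q : ℝ × ℂ => p + (q.1 : ℂ) * (q.2 - p)) ''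
      (Set.Icc (0:ℝ) 1 ×ˢ Metric.closedBall w δ) with hKdef
  have hKcp : IsCompact K := by
    apply (isCompact_Icc.prod (isCompact_closedBall w δ)).image
    fun_prop
  have hKS : K ⊆ UHP := by
    rintro _ ⟨⟨s, x⟩, ⟨hs, hx⟩, rfl⟩
    exact seg_mem_UHP hp (hcb hx) hs.1 hs.2
  have hmemK : ∀ s ∈ Set.Icc (0:ℝ) 1, ∀ x ∈ Metric.closedBall w δ,
      p + (s : ℂ) * (x - p) ∈ K := fun s hs x hx => ⟨(s, x), ⟨hs, hx⟩, rfl⟩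
  have hcg : ContinuousOn g UHP := hg.continuousOn
  have hcg' : ContinuousOn (deriv g) UHP := contOn_deriv hg
  obtain ⟨C₁, hC₁⟩ := hKcp.exists_bound_of_continuousOn (hcg.mono hKS)
  obtain ⟨C₂, hC₂⟩ := hKcp.exists_bound_of_continuousOn (hcg'.mono hKS)
  have hC₂0 : 0 ≤ C₂ := le_trans (norm_nonneg _)
    (hC₂ _ (hmemK 0 ⟨le_refl 0, zero_le_one⟩ w (Metric.mem_closedBall_self hδ.le)))
  set F' : ℂ → ℝ → ℂ := fun x s =>
    g (p + (s : ℂ) * (x - p)) + (x - p) * ((s : ℂ) * deriv g (p + (s : ℂ) * (x - p))) with hF'def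
  have hpathc : ∀ x : ℂ, Continuous (fun s : ℝ => p + (s : ℂ) * (x - p)) := by
    intro x; fun_prop
  have hcont : ∀ x ∈ Metric.closedBall w δ,
      ContinuousOn (fun s : ℝ => (x - p) * g (p + (s : ℂ) * (x - p))) (Set.Icc (0:ℝ) 1) := by
    intro x hx
    apply ContinuousOn.mul continuousOn_const
    exact hcg.comp (hpathc x).continuousOn fun s hs => seg_mem_UHP hp (hcb hx) hs.1 hs.2
  have hcont' : ∀ x ∈ Metric.closedBall w δ,
      ContinuousOn (F' x) (Set.Icc (0:ℝ) 1) := by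
    intro x hx
    have h1 : ContinuousOn (fun s : ℝ => g (p + (s : ℂ) * (x - p))) (Set.Icc (0:ℝ) 1) :=
      hcg.comp (hpathc x).continuousOn fun s hs => seg_mem_UHP hp (hcb hx) hs.1 hs.2
    have h2 : ContinuousOn (fun s : ℝ => deriv g (p + (s : ℂ) * (x - p))) (Set.Icc (0:ℝ) 1) :=
      hcg'.comp (hpathc x).continuousOn fun s hs => seg_mem_UHP hp (hcb hx) hs.1 hs.2
    exact h1.add (continuousOn_const.mul
      ((Complex.continuous_ofReal.continuousOn).mul h2))
  have hIsub : Set.uIoc (0:ℝ) 1 ⊆ Set.Icc (0:ℝ) 1 := by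
    rw [Set.uIoc_of_le zero_le_one]; exact Set.Ioc_subset_Icc_self
  have hIcc : Set.uIcc (0:ℝ) 1 = Set.Icc (0:ℝ) 1 := Set.uIcc_of_le zero_le_one
  have key := intervalIntegral.hasDerivAt_integral_of_dominated_loc_of_deriv_le
    (F := fun x : ℂ => fun s : ℝ => (x - p) * g (p + (s : ℂ) * (x - p)))
    (F' := F') (x₀ := w) (a := 0) (b := 1) (μ := MeasureTheory.volume)
    (bound := fun _ => C₁ + (‖w - p‖ + δ) * C₂) (Metric.ball_mem_nhds w hδ)
    ?_ ?_ ?_ ?_ ?_ ?_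
  · rcases key with ⟨-, hkey⟩
    have hval : (∫ s in (0:ℝ)..1, F' w s) = g w := by
      have hφ : ∀ s ∈ Set.uIcc (0:ℝ) 1,
          HasDerivAt (fun u : ℝ => (u : ℂ) * g (p + (u : ℂ) * (w - p))) (F' w s) s := by
        intro s hs
        rw [hIcc] at hs
        have hmem : p + (s : ℂ) * (w - p) ∈ UHP := seg_mem_UHP hp hw hs.1 hs.2
        have hgd : HasDerivAt g (deriv g (p + (s : ℂ) * (w - p))) (p + (s : ℂ) * (w - p)) :=
          (hg.differentiableAt (isOpen_UHP.mem_nhds hmem)).hasDerivAt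
        have hinner : HasDerivAt (fun x : ℂ => p + x * (w - p)) (w - p) ((s : ℂ)) := by
          simpa using ((hasDerivAt_id ((s:ℂ))).mul_const (w - p)).const_add p
        have hcomp : HasDerivAt (fun x : ℂ => g (p + x * (w - p)))
            (deriv g (p + (s : ℂ) * (w - p)) * (w - p)) ((s:ℂ)) := hgd.comp ((s:ℂ)) hinner
        have hprod : HasDerivAt (fun x : ℂ => x * g (p + x * (w - p)))
            (1 * g (p + (s:ℂ) * (w - p)) + (s:ℂ) * (deriv g (p + (s : ℂ) * (w - p)) * (w - p)))
            ((s:ℂ)) := (hasDerivAt_id _).mul hcomp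
        have := hprod.comp_ofReal
        convert this using 1
        simp only [hF'def, id_eq]; ring
      have hint : IntervalIntegrable (F' w) MeasureTheory.volume 0 1 := by
        apply ContinuousOn.intervalIntegrable
        rw [hIcc]
        exact hcont' w (Metric.mem_closedBall_self hδ.le)
      have := intervalIntegral.integral_eq_sub_of_hasDerivAt hφ hint
      rw [this]
      simp
    rw [hval] at hkey
    exact hkey
  · -- hF_meas
    filter_upwards [Metric.ball_mem_nhds w hδ] with x hx
    exact ((hcont x (Metric.ball_subset_closedBall hx)).mono hIsub).aestronglyMeasurable
      measurableSet_uIoc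
  · -- hF_int
    apply ContinuousOn.intervalIntegrable
    rw [hIcc]
    exact hcont w (Metric.mem_closedBall_self hδ.le)
  · -- hF'_meas
    exact ((hcont' w (Metric.mem_closedBall_self hδ.le)).mono hIsub).aestronglyMeasurable
      measurableSet_uIoc
  · -- h_bound
    apply MeasureTheory.ae_of_all
    intro s hs x hx
    have hsI : s ∈ Set.Icc (0:ℝ) 1 := hIsub hs
    have hxcb : x ∈ Metric.closedBall w δ :=
      Metric.ball_subset_closedBall hx
    have hmem := hmemK s hsI x hxcb
    have hb1 : ‖g (p + (s : ℂ) * (x - p))‖ ≤ C₁ := hC₁ _ hmem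
    have hb2 : ‖deriv g (p + (s : ℂ) * (x - p))‖ ≤ C₂ := hC₂ _ hmem
    have hxp : ‖x - p‖ ≤ ‖w - p‖ + δ := by
      have : ‖x - p‖ ≤ ‖x - w‖ + ‖w - p‖ := by
        simpa using norm_sub_le_norm_sub_add_norm_sub x w p
      have hxw : ‖x - w‖ ≤ δ := by
        rw [← dist_eq_norm]
        exact le_of_lt (Metric.mem_ball.1 hx)
      linarith
    have hsn : ‖(s : ℂ)‖ ≤ 1 := by
      rw [Complex.norm_real]
      rw [Real.norm_eq_abs, _root_.abs_of_nonneg hsI.1]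
      exact hsI.2
    calc ‖F' x s‖ ≤ ‖g (p + (s : ℂ) * (x - p))‖ +
          ‖(x - p) * ((s : ℂ) * deriv g (p + (s : ℂ) * (x - p)))‖ := norm_add_le _ _
      _ ≤ C₁ + (‖w - p‖ + δ) * C₂ := by
          rw [norm_mul, norm_mul]
          have h2 : ‖(s : ℂ)‖ * ‖deriv g (p + (s : ℂ) * (x - p))‖ ≤ C₂ := by
            calc ‖(s : ℂ)‖ * ‖deriv g (p + (s : ℂ) * (x - p))‖ ≤ 1 * C₂ := by
                  apply mul_le_mul hsn hb2 (norm_nonneg _) zero_le_one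
              _ = C₂ := one_mul _
          have := mul_le_mul hxp h2 (by positivity) (by positivity)
          linarith
  · -- bound integrable
    exact intervalIntegrable_const
  · -- h_diff
    apply MeasureTheory.ae_of_all
    intro s hs x hx
    have hsI : s ∈ Set.Icc (0:ℝ) 1 := hIsub hs
    have hmem : p + (s : ℂ) * (x - p) ∈ UHP :=
      seg_mem_UHP hp (hcb (Metric.ball_subset_closedBall hx)) hsI.1 hsI.2
    have hgd : HasDerivAt g (deriv g (p + (s : ℂ) * (x - p))) (p + (s : ℂ) * (x - p)) :=
      (hg.differentiableAt (isOpen_UHP.mem_nhds hmem)).hasDerivAt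
    have hinner : HasDerivAt (fun x : ℂ => p + (s : ℂ) * (x - p)) ((s : ℂ)) x := by
      simpa using (((hasDerivAt_id x).sub_const p).const_mul ((s:ℂ))).const_add p
    have hcomp : HasDerivAt (fun x : ℂ => g (p + (s : ℂ) * (x - p)))
        (deriv g (p + (s : ℂ) * (x - p)) * (s : ℂ)) x := hgd.comp x hinner
    have hprod := ((hasDerivAt_id x).sub_const p).mul hcomp
    refine hprod.congr_deriv ?_
    simp only [hF'def, id_eq]; ring

lemma ftc_seg {G g : ℂ → ℂ} (hg : ContinuousOn g UHP)
    (hG : ∀ z ∈ UHP, HasDerivAt G (g z) z) {w₁ w₂ : ℂ} (h1 : w₁ ∈ UHP) (h2 : w₂ ∈ UHP) :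
    ∫ s in (0:ℝ)..1, (w₂ - w₁) * g (w₁ + (s : ℂ) * (w₂ - w₁)) = G w₂ - G w₁ := by
  have hIcc : Set.uIcc (0:ℝ) 1 = Set.Icc (0:ℝ) 1 := Set.uIcc_of_le zero_le_one
  have hφ : ∀ s ∈ Set.uIcc (0:ℝ) 1,
      HasDerivAt (fun u : ℝ => G (w₁ + (u : ℂ) * (w₂ - w₁)))
        ((w₂ - w₁) * g (w₁ + (s : ℂ) * (w₂ - w₁))) s := by
    intro s hs
    rw [hIcc] at hs
    have hmem : w₁ + (s : ℂ) * (w₂ - w₁) ∈ UHP := seg_mem_UHP h1 h2 hs.1 hs.2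
    have hinner : HasDerivAt (fun x : ℂ => w₁ + x * (w₂ - w₁)) (w₂ - w₁) ((s : ℂ)) := by
      simpa using ((hasDerivAt_id ((s:ℂ))).mul_const (w₂ - w₁)).const_add w₁
    have hcomp : HasDerivAt (fun x : ℂ => G (w₁ + x * (w₂ - w₁)))
        (g (w₁ + (s : ℂ) * (w₂ - w₁)) * (w₂ - w₁)) ((s:ℂ)) :=
      (hG _ hmem).comp ((s:ℂ)) hinner
    have := hcomp.comp_ofReal
    convert this using 1
    ring
  have hpathc : Continuous (fun s : ℝ => w₁ + (s : ℂ) * (w₂ - w₁)) := by fun_prop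
  have hint : IntervalIntegrable (fun s : ℝ => (w₂ - w₁) * g (w₁ + (s : ℂ) * (w₂ - w₁)))
      MeasureTheory.volume 0 1 := by
    apply ContinuousOn.intervalIntegrable
    rw [hIcc]
    exact continuousOn_const.mul
      (hg.comp hpathc.continuousOn fun s hs => seg_mem_UHP h1 h2 hs.1 hs.2)
  have := intervalIntegral.integral_eq_sub_of_hasDerivAt hφ hint
  rw [this]
  norm_num

/-- The integral `∫_{w₁}^{w₂} (z - t)^(r-2) F z dz` along the straight segment from
`w₁` to `w₂` (in ℍ the integral is path independent since the integrand is
holomorphic). -/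
noncomputable def segInt (r : ℂ) (F : ℂ → ℂ) (w₁ w₂ t : ℂ) : ℂ :=
  ∫ s in (0:ℝ)..1,
    (w₂ - w₁) * ((w₁ + (s : ℂ) * (w₂ - w₁) - t) ^ (r - 2)) *
      F (w₁ + (s : ℂ) * (w₂ - w₁))

lemma segInt_eq_intg (r : ℂ) (F : ℂ → ℂ) (w₁ w₂ t : ℂ) :
    segInt r F w₁ w₂ t =
      ∫ s in (0:ℝ)..1, (w₂ - w₁) * ((fun z => (z - t) ^ (r - 2) * F z)
        (w₁ + (s : ℂ) * (w₂ - w₁))) := by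
  unfold segInt
  congr 1
  ext s
  ring

lemma segInt_sub_prim {r t : ℂ} (ht : t.im < 0) {F : ℂ → ℂ}
    (hF : DifferentiableOn ℂ F UHP) {p : ℂ} (hp : p ∈ UHP) {w₁ w₂ : ℂ}
    (h1 : w₁ ∈ UHP) (h2 : w₂ ∈ UHP) :
    segInt r F w₁ w₂ t =
      (fun x : ℂ => ∫ s in (0:ℝ)..1, (x - p) * ((fun z => (z - t) ^ (r - 2) * F z)
        (p + (s : ℂ) * (x - p)))) w₂ -
      (fun x : ℂ => ∫ s in (0:ℝ)..1, (x - p) * ((fun z => (z - t) ^ (r - 2) * F z)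
        (p + (s : ℂ) * (x - p)))) w₁ := by
  have hgd := integrand_diffOn (r := r) ht hF
  rw [segInt_eq_intg]
  exact ftc_seg hgd.continuousOn (fun z hz => hasDerivAt_primitive hgd hp hz) h1 h2

lemma segInt_add {r t : ℂ} (ht : t.im < 0) {F : ℂ → ℂ}
    (hF : DifferentiableOn ℂ F UHP) {w₁ w₂ w₃ : ℂ}
    (h1 : w₁ ∈ UHP) (h2 : w₂ ∈ UHP) (h3 : w₃ ∈ UHP) :
    segInt r F w₁ w₃ t = segInt r F w₁ w₂ t + segInt r F w₂ w₃ t := by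
  rw [segInt_sub_prim ht hF h1 h1 h3, segInt_sub_prim ht hF h1 h1 h2,
    segInt_sub_prim ht hF h1 h2 h3]
  ring

lemma segInt_rev {r t : ℂ} (ht : t.im < 0) {F : ℂ → ℂ}
    (hF : DifferentiableOn ℂ F UHP) {w₁ w₂ : ℂ} (h1 : w₁ ∈ UHP) (h2 : w₂ ∈ UHP) :
    segInt r F w₂ w₁ t = - segInt r F w₁ w₂ t := by
  rw [segInt_sub_prim ht hF h1 h1 h2, segInt_sub_prim ht hF h1 h2 h1]
  ring

lemma mact_mem_UHP (g : SL2) {z : ℂ} (hz : 0 < z.im) : mact g z ∈ UHP := by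
  have hd := mdenom_ne_zero g (ne_of_gt hz)
  show 0 < (mact g z).im
  rw [im_mact g (ne_of_gt hz)]
  exact div_pos hz (normSq_pos.2 hd)

lemma mact_im_neg (g : SL2) {t : ℂ} (ht : t.im < 0) : (mact g t).im < 0 := by
  have hd := mdenom_ne_zero g (ne_of_lt ht)
  rw [im_mact g (ne_of_lt ht)]
  exact div_neg_of_neg_of_pos ht (normSq_pos.2 hd)

lemma key_pointwise (γ : SL2) {v : ℂ} (hv : v ≠ 0) {r : ℂ} {F : ℂ → ℂ}
    (hFγ : ∀ z : ℂ, 0 < z.im → F (mact γ z) = v * (mdenom γ z) ^ r * F z)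
    {z t : ℂ} (hz : 0 < z.im) (ht : t.im < 0) :
    ((mact γ⁻¹ z - t) ^ (r - 2) * F (mact γ⁻¹ z)) * ((mdenom γ⁻¹ z) ^ 2)⁻¹ =
      v⁻¹ * cpowLHP (mdenom γ t) (r - 2) * ((z - mact γ t) ^ (r - 2) * F z) := by
  set w := mact γ⁻¹ z with hwdef
  have hw : 0 < w.im := mact_mem_UHP γ⁻¹ hz
  have hzw : mact γ w = z := by
    rw [hwdef]
    have := mact_inv γ⁻¹ (ne_of_gt hz)
    rwa [inv_inv] at this
  have hA : mdenom γ w ≠ 0 := mdenom_ne_zero γ (ne_of_gt hw)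
  have hB : mdenom γ t ≠ 0 := mdenom_ne_zero γ (ne_of_lt ht)
  have hFz : F z = v * (mdenom γ w) ^ r * F w := by rw [← hzw]; exact hFγ w hw
  have hdiff : z - mact γ t = (w - t) / (mdenom γ w * mdenom γ t) := by
    rw [← hzw]; exact mact_sub_mact γ hA hB
  have hden : mdenom γ⁻¹ z = (mdenom γ w)⁻¹ := by
    have h := mdenom_inv_mact γ (ne_of_gt hw)
    rw [hzw] at h
    exact eq_inv_of_mul_eq_one_left h
  have hζ : 0 < (w - t).im := by
    rw [Complex.sub_im]; linarith [hw, ht]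
  have hq : 0 < ((w - t) / (mdenom γ w * mdenom γ t)).im := by
    rw [← hdiff, Complex.sub_im]
    have := mact_im_neg γ ht
    linarith [hz]
  have hbr := cpow_branch hζ hq hA hB (arg_add_logLHP_bound γ hw ht) (r - 2)
  rw [hFz, hdiff, hden, hbr]
  have hζ0 : w - t ≠ 0 := by
    intro h; rw [h] at hζ; simp at hζ
  have hAr2 : (mdenom γ w) ^ (r - 2) ≠ 0 := cpow_ne_zero' hA _
  have hLB : cpowLHP (mdenom γ t) (r - 2) ≠ 0 := cpowLHP_ne_zero hB _
  have hAr : (mdenom γ w) ^ r = (mdenom γ w) ^ (r - 2) * (mdenom γ w) ^ (2 : ℂ) := by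
    rw [← Complex.cpow_add _ _ hA]; ring_nf
  have hA2 : (mdenom γ w) ^ (2 : ℂ) = (mdenom γ w) ^ (2 : ℕ) := by
    rw [show ((2:ℂ)) = ((2:ℕ):ℂ) by norm_num, Complex.cpow_natCast]
  rw [hAr, hA2]
  field_simp

lemma segInt_transform (γ : SL2) {v : ℂ} (hv : v ≠ 0) {r : ℂ} {F : ℂ → ℂ}
    (hF : DifferentiableOn ℂ F UHP)
    (hFγ : ∀ z : ℂ, 0 < z.im → F (mact γ z) = v * (mdenom γ z) ^ r * F z)
    {w₁ w₂ t : ℂ} (h1 : w₁ ∈ UHP) (h2 : w₂ ∈ UHP) (ht : t.im < 0) :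
    segInt r F (mact γ⁻¹ w₁) (mact γ⁻¹ w₂) t =
      v⁻¹ * cpowLHP (mdenom γ t) (r - 2) * segInt r F w₁ w₂ (mact γ t) := by
  have h1' : 0 < w₁.im := h1
  have h2' : 0 < w₂.im := h2
  have hτ : (mact γ t).im < 0 := mact_im_neg γ ht
  have hgd := integrand_diffOn (r := r) ht hF
  set G : ℂ → ℂ := fun x : ℂ => ∫ s in (0:ℝ)..1,
      (x - w₁) * ((fun z => (z - t) ^ (r - 2) * F z) (w₁ + (s : ℂ) * (x - w₁))) with hGdef
  have hw1u : mact γ⁻¹ w₁ ∈ UHP := mact_mem_UHP γ⁻¹ h1'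
  have hw2u : mact γ⁻¹ w₂ ∈ UHP := mact_mem_UHP γ⁻¹ h2'
  have hG : ∀ z ∈ UHP, HasDerivAt G ((z - t) ^ (r - 2) * F z) z := fun z hz =>
    hasDerivAt_primitive hgd h1 hz
  have hLHS : segInt r F (mact γ⁻¹ w₁) (mact γ⁻¹ w₂) t =
      G (mact γ⁻¹ w₂) - G (mact γ⁻¹ w₁) := by
    rw [segInt_eq_intg]
    exact ftc_seg hgd.continuousOn hG hw1u hw2u
  set K : ℂ → ℂ := fun z => G (mact γ⁻¹ z) with hKdef
  have hK : ∀ z ∈ UHP, HasDerivAt K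
      (v⁻¹ * cpowLHP (mdenom γ t) (r - 2) * ((z - mact γ t) ^ (r - 2) * F z)) z := by
    intro z hz
    have hz' : 0 < z.im := hz
    have hdz : mdenom γ⁻¹ z ≠ 0 := mdenom_ne_zero γ⁻¹ (ne_of_gt hz')
    have hmem : mact γ⁻¹ z ∈ UHP := mact_mem_UHP γ⁻¹ hz'
    have hmd : HasDerivAt (mact γ⁻¹) (((mdenom γ⁻¹ z) ^ 2)⁻¹) z := hasDerivAt_mact γ⁻¹ hdz
    have hcomp := (hG _ hmem).comp z hmd
    have heq := key_pointwise γ hv hFγ (r := r) (F := F) hz' ht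
    rw [← heq]
    exact hcomp
  have hRHS : v⁻¹ * cpowLHP (mdenom γ t) (r - 2) * segInt r F w₁ w₂ (mact γ t)
      = K w₂ - K w₁ := by
    have hgc : ContinuousOn (fun z => v⁻¹ * cpowLHP (mdenom γ t) (r - 2) *
        ((z - mact γ t) ^ (r - 2) * F z)) UHP :=
      continuousOn_const.mul (integrand_diffOn (r := r) hτ hF).continuousOn
    have hf := ftc_seg hgc hK h1 h2
    rw [← hf, segInt_eq_intg, ← intervalIntegral.integral_const_mul]
    congr 1
    ext s
    ring
  rw [hLHS, hRHS]

/-- for an automorphic form `F` (weight `r`, multiplier system `v`) the map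
`ψ_γ (t) = ∫_{γ⁻¹ z₀}^{z₀} (z-t)^(r-2) F z dz` satisfies the cocycle relation
`ψ_{γδ} = ψ_γ|_{v,2-r} δ + ψ_δ`, and changing the base point `z₀` to `z₁` changes `ψ`
by the coboundary `γ ↦ b|_{v,2-r}(γ - 1)` with `b t = ∫_{z₀}^{z₁} (z-t)^(r-2) F z dz`. -/
theorem eichler_cocycle_and_coboundary
    (r : ℂ) (Γ : Subgroup (Matrix.SpecialLinearGroup (Fin 2) ℝ))
    (v : Matrix.SpecialLinearGroup (Fin 2) ℝ → ℂ)
    (hv : ∀ γ ∈ Γ, v γ ≠ 0)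
    (hms : ∀ γ ∈ Γ, ∀ δ ∈ Γ, ∀ z : ℂ, 0 < z.im →
        v (γ * δ) * (mdenom (γ * δ) z) ^ r =
          (v γ * (mdenom γ (mact δ z)) ^ r) * (v δ * (mdenom δ z) ^ r))
    (F : ℂ → ℂ) (hF : DifferentiableOn ℂ F {z : ℂ | 0 < z.im})
    (hauto : ∀ γ ∈ Γ, ∀ z : ℂ, 0 < z.im →
        F (mact γ z) = v γ * (mdenom γ z) ^ r * F z)
    (z₀ z₁ : ℂ) (hz₀ : 0 < z₀.im) (hz₁ : 0 < z₁.im) :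
    (∀ γ ∈ Γ, ∀ δ ∈ Γ, ∀ t : ℂ, t.im < 0 →
        segInt r F (mact (γ * δ)⁻¹ z₀) z₀ t =
          (v δ)⁻¹ * cpowLHP (mdenom δ t) (r - 2) *
              segInt r F (mact γ⁻¹ z₀) z₀ (mact δ t) +
            segInt r F (mact δ⁻¹ z₀) z₀ t) ∧
    (∀ γ ∈ Γ, ∀ t : ℂ, t.im < 0 →
        segInt r F (mact γ⁻¹ z₀) z₀ t - segInt r F (mact γ⁻¹ z₁) z₁ t =
          (v γ)⁻¹ * cpowLHP (mdenom γ t) (r - 2) * segInt r F z₀ z₁ (mact γ t) -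
            segInt r F z₀ z₁ t) := by
  have hFU : DifferentiableOn ℂ F UHP := hF
  have hz₀u : z₀ ∈ UHP := hz₀
  have hz₁u : z₁ ∈ UHP := hz₁
  constructor
  · intro γ hγ δ hδ t ht
    have hγz₀ : mact γ⁻¹ z₀ ∈ UHP := mact_mem_UHP γ⁻¹ hz₀
    have hδz₀ : mact δ⁻¹ z₀ ∈ UHP := mact_mem_UHP δ⁻¹ hz₀
    have hδγz₀ : mact δ⁻¹ (mact γ⁻¹ z₀) ∈ UHP := mact_mem_UHP δ⁻¹ hγz₀
    have hsplit : mact (γ * δ)⁻¹ z₀ = mact δ⁻¹ (mact γ⁻¹ z₀) := by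
      rw [mul_inv_rev]
      exact mact_mul δ⁻¹ γ⁻¹ (mdenom_ne_zero γ⁻¹ (ne_of_gt hz₀))
        (mdenom_ne_zero δ⁻¹ (ne_of_gt (hγz₀ : 0 < (mact γ⁻¹ z₀).im)))
    rw [hsplit, segInt_add ht hFU hδγz₀ hδz₀ hz₀u,
      segInt_transform δ (hv δ hδ) hFU (fun z hz => hauto δ hδ z hz) hγz₀ hz₀u ht]
  · intro γ hγ t ht
    have ha : mact γ⁻¹ z₀ ∈ UHP := mact_mem_UHP γ⁻¹ hz₀
    have hb : mact γ⁻¹ z₁ ∈ UHP := mact_mem_UHP γ⁻¹ hz₁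
    have e1 := segInt_add (r := r) (F := F) ht hFU ha hb hz₀u
    have e2 := segInt_add (r := r) (F := F) ht hFU hb hz₁u hz₀u
    have e3 := segInt_transform γ (hv γ hγ) hFU (fun z hz => hauto γ hγ z hz) hz₀u hz₁u ht
    have e4 := segInt_rev (r := r) (F := F) ht hFU hz₁u hz₀u
    rw [e1, e2, e3, e4]
    ring
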